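/- Let H : ℝ → Matrix n n ℂ be a path of Hermitian matrices that is twice differentiable at s₀, let ω0 : ℝ → ℝ be continuous with ω0(s) an eigenvalue of H(s) for s near s₀, and let Δ > 0 be such that the spectrum of H(s₀) intersected with the closed interval [ω0(s₀) − Δ, ω0(s₀) + Δ] equals {ω0(s₀)}. Let P : ℝ → Matrix n n ℂ be twice differentiable at s₀, where for each s near s₀, P(s) is the orthogonal projection onto the eigenspace of H(s) for the eigenvalue ω0(s). Then ‖P''(s₀)‖ ≤ 8·‖H'(s₀)‖²/Δ² + 2·‖H''(s₀)‖/Δ. -/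

import Mathlib

open scoped Matrix.Norms.L2Operator Topology
open Matrix

namespace SpecAux

variable {n : ℕ}

local notation "𝕄" => Matrix (Fin n) (Fin n) ℂ
local notation "E" => EuclideanSpace ℂ (Fin n)

noncomputable def ev (A : 𝕄) (x : E) : E :=
  (EuclideanSpace.equiv (Fin n) ℂ).symm (A *ᵥ x)

lemma norm_ev_le (A : 𝕄) (x : E) : ‖ev A x‖ ≤ ‖A‖ * ‖x‖ :=
  Matrix.l2_opNorm_mulVec A x

lemma ev_mul (A B : 𝕄) (x : E) : ev (A * B) x = ev A (ev B x) := by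
  show (EuclideanSpace.equiv (Fin n) ℂ).symm ((A * B) *ᵥ x) =
    (EuclideanSpace.equiv (Fin n) ℂ).symm (A *ᵥ (B *ᵥ x))
  rw [Matrix.mulVec_mulVec]

lemma ev_one (x : E) : ev 1 x = x := by
  simp only [ev, Matrix.one_mulVec]
  rfl

lemma ev_add (A B : 𝕄) (x : E) : ev (A + B) x = ev A x + ev B x := by
  simp [ev, Matrix.add_mulVec]

lemma ev_sub (A B : 𝕄) (x : E) : ev (A - B) x = ev A x - ev B x := by
  simp [ev, Matrix.sub_mulVec]

lemma ev_zero (x : E) : ev (0 : 𝕄) x = 0 := by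
  simp [ev]

lemma ev_smul (c : ℂ) (A : 𝕄) (x : E) : ev (c • A) x = c • ev A x := by
  simp [ev, Matrix.smul_mulVec]

lemma opNorm_le_of (A : 𝕄) {c : ℝ} (hc : 0 ≤ c) (h : ∀ x : E, ‖ev A x‖ ≤ c * ‖x‖) :
    ‖A‖ ≤ c := by
  rw [Matrix.l2_opNorm_def]
  exact ContinuousLinearMap.opNorm_le_bound _ hc fun x => h x

lemma inner_ev (A : 𝕄) (x y : E) : (inner ℂ (ev A x) y : ℂ) = inner ℂ x (ev Aᴴ y) := by
  rw [EuclideanSpace.inner_eq_star_dotProduct, EuclideanSpace.inner_eq_star_dotProduct]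
  show dotProduct y (star (A *ᵥ x)) = dotProduct (Aᴴ *ᵥ y) (star x)
  rw [Matrix.star_mulVec, dotProduct_comm, ← Matrix.dotProduct_mulVec, dotProduct_comm]

lemma pyth (Pm : 𝕄) (h : Pmᴴ = Pm) (hi : Pm * Pm = Pm) (x : E) :
    ‖x‖ ^ 2 = ‖ev Pm x‖ ^ 2 + ‖ev (1 - Pm) x‖ ^ 2 := by
  have hx : x = ev Pm x + ev (1 - Pm) x := by
    rw [← ev_add, add_sub_cancel, ev_one]
  have hinner : (inner ℂ (ev Pm x) (ev (1 - Pm) x) : ℂ) = 0 := by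
    rw [inner_ev, h, ← ev_mul]
    have : Pm * (1 - Pm) = 0 := by rw [mul_sub, mul_one, hi, sub_self]
    rw [this, ev_zero, inner_zero_right]
  calc ‖x‖ ^ 2 = ‖ev Pm x + ev (1 - Pm) x‖ ^ 2 := by rw [← hx]
    _ = ‖ev Pm x‖ ^ 2 + 2 * (RCLike.re (inner ℂ (ev Pm x) (ev (1 - Pm) x) : ℂ))
        + ‖ev (1 - Pm) x‖ ^ 2 := by rw [@norm_add_sq ℂ]
    _ = ‖ev Pm x‖ ^ 2 + ‖ev (1 - Pm) x‖ ^ 2 := by rw [hinner]; simp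

lemma gap_vec {Hm Pm : 𝕄} (hH : Hm.IsHermitian) (hP : Pmᴴ = Pm) (ω Δ : ℝ)
    (hΔ : 0 < Δ)
    (heig : ∀ i, hH.eigenvalues i ≠ ω → Δ ≤ |hH.eigenvalues i - ω|)
    (hproj : ∀ v : Fin n → ℂ, Hm *ᵥ v = (ω : ℂ) • v ↔ Pm *ᵥ v = v)
    (x : E) (hx : ev Pm x = 0) :
    Δ * ‖x‖ ≤ ‖ev (Hm - (ω : ℂ) • 1) x‖ := by
  classical
  set A : 𝕄 := Hm - (ω : ℂ) • 1 with hA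
  have hAH : Aᴴ = A := by
    rw [hA, conjTranspose_sub, hH.eq, conjTranspose_smul, conjTranspose_one]
    norm_num
  set b := hH.eigenvectorBasis with hb
  set d := hH.eigenvalues with hd
  have hev : ∀ i, ev A (b i) = ((d i - ω : ℝ) : ℂ) • b i := by
    intro i
    have h1 := hH.mulVec_eigenvectorBasis i
    have h2 : ev Hm (b i) = ((d i : ℝ) : ℂ) • b i := by
      ext j
      have h3 := congrFun h1 j
      calc (Hm *ᵥ (b i : Fin n → ℂ)) j
          = (hH.eigenvalues i • (WithLp.equiv 2 (Fin n → ℂ)) (b i)) j := h3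
        _ = ((d i : ℂ) • b i) j := by simp [Complex.real_smul, hd]
    rw [hA, ev_sub, ev_smul, ev_one, h2]
    push_cast
    rw [sub_smul]
  have hrepr : ∀ i, b.repr (ev A x) i = ((d i - ω : ℝ) : ℂ) * b.repr x i := by
    intro i
    have key := inner_ev Aᴴ (b i) x
    rw [conjTranspose_conjTranspose] at key
    rw [b.repr_apply_apply, b.repr_apply_apply, ← key, hAH, hev i, inner_smul_left]
    simp
  have hker : ∀ i, d i = ω → b.repr x i = 0 := by
    intro i hi
    have h1 := hH.mulVec_eigenvectorBasis i
    have h1' : Hm *ᵥ (WithLp.equiv 2 _) (b i) = (ω : ℂ) • (WithLp.equiv 2 _) (b i) := by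
      change Hm *ᵥ (b i).ofLp = (ω : ℂ) • (b i).ofLp
      rw [hb, h1]
      funext j
      have : hH.eigenvalues i = ω := hi
      simp [this, Complex.real_smul]
    have h2 := (hproj _).1 h1'
    have h3 : ev Pm (b i) = b i := by
      ext j
      exact congrFun h2 j
    rw [b.repr_apply_apply]
    calc (inner ℂ (b i) x : ℂ) = inner ℂ (ev Pm (b i)) x := by rw [h3]
      _ = inner ℂ (b i) (ev Pm x) := by rw [inner_ev, hP]
      _ = 0 := by rw [hx, inner_zero_right]
  have hnorm : ∀ y : E, ‖y‖ ^ 2 = ∑ i, ‖b.repr y i‖ ^ 2 := by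
    intro y
    rw [← b.repr.norm_map y, EuclideanSpace.norm_eq, Real.sq_sqrt (by positivity)]
  have hsum : Δ ^ 2 * ‖x‖ ^ 2 ≤ ‖ev A x‖ ^ 2 := by
    rw [hnorm x, hnorm (ev A x), Finset.mul_sum]
    apply Finset.sum_le_sum
    intro i _
    rw [hrepr i]
    by_cases hi : d i = ω
    · rw [hker i hi]
      simp
    · have h1 : Δ ≤ |d i - ω| := heig i hi
      rw [norm_mul]
      have h2 : ‖((d i - ω : ℝ) : ℂ)‖ = |d i - ω| := by
        rw [Complex.norm_real, Real.norm_eq_abs]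
      rw [h2, mul_pow]
      have : Δ ^ 2 ≤ |d i - ω| ^ 2 := by nlinarith [hΔ.le]
      nlinarith [norm_nonneg (b.repr x i), sq_nonneg (b.repr x i : ℂ).re]
  nlinarith [norm_nonneg (ev A x), mul_nonneg hΔ.le (norm_nonneg x), sq_nonneg (Δ * ‖x‖)]

lemma gap_mat {Hm Pm : 𝕄} (hH : Hm.IsHermitian) (hP : Pmᴴ = Pm) (ω Δ : ℝ)
    (hΔ : 0 < Δ)
    (heig : ∀ i, hH.eigenvalues i ≠ ω → Δ ≤ |hH.eigenvalues i - ω|)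
    (hproj : ∀ v : Fin n → ℂ, Hm *ᵥ v = (ω : ℂ) • v ↔ Pm *ᵥ v = v)
    (X : 𝕄) (hX : Pm * X = 0) :
    Δ * ‖X‖ ≤ ‖(Hm - (ω : ℂ) • 1) * X‖ := by
  set A : 𝕄 := Hm - (ω : ℂ) • 1
  have key : ∀ v : E, ‖ev X v‖ ≤ (‖A * X‖ / Δ) * ‖v‖ := by
    intro v
    have h1 : ev Pm (ev X v) = 0 := by
      rw [← ev_mul, hX, ev_zero]
    have h2 := gap_vec hH hP ω Δ hΔ heig hproj (ev X v) h1
    rw [← ev_mul] at h2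
    have h3 : ‖ev (A * X) v‖ ≤ ‖A * X‖ * ‖v‖ := norm_ev_le _ _
    rw [div_mul_eq_mul_div, le_div_iff₀ hΔ]
    calc ‖ev X v‖ * Δ = Δ * ‖ev X v‖ := by ring
      _ ≤ ‖ev (A * X) v‖ := h2
      _ ≤ ‖A * X‖ * ‖v‖ := h3
  have h4 : ‖X‖ ≤ ‖A * X‖ / Δ := opNorm_le_of X (by positivity) key
  calc Δ * ‖X‖ ≤ Δ * (‖A * X‖ / Δ) := by nlinarith
    _ = ‖A * X‖ := by field_simp

lemma arith_assemble {al be a b u w X V : ℝ} (hal : 0 ≤ al) (halbe : al ≤ be)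
    (ha : 0 ≤ a) (hb : 0 ≤ b) (hu : 0 ≤ u) (hw : 0 ≤ w) (hX : 0 ≤ X) (hV : 0 ≤ V)
    (hv : V ^ 2 = a ^ 2 + b ^ 2) (hX2 : X ^ 2 = u ^ 2 + w ^ 2)
    (n1 : u ≤ al * a + be * b) (n2 : w ≤ be * a + al * b) : X ≤ 2 * be * V := by
  have hbe : 0 ≤ be := le_trans hal halbe
  have k1 : u ≤ be * a + be * b := by nlinarith
  have k2 : w ≤ be * a + be * b := by nlinarith
  have u1 : u ^ 2 ≤ (be * a + be * b) ^ 2 := by nlinarith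
  have u2 : w ^ 2 ≤ (be * a + be * b) ^ 2 := by nlinarith
  have k3 : X ^ 2 ≤ (2 * be * V) ^ 2 := by nlinarith [mul_nonneg (mul_nonneg hbe hbe) (sq_nonneg (a - b))]
  have h2V : 0 ≤ 2 * be * V := by positivity
  nlinarith

lemma assemble (P₂ P₀ : 𝕄) (hP0h : P₀ᴴ = P₀) (hP0i : P₀ * P₀ = P₀) {al be : ℝ}
    (hal : 0 ≤ al) (halbe : al ≤ be)
    (h1 : ‖P₀ * P₂ * P₀‖ ≤ al) (h2 : ‖P₀ * P₂ * (1 - P₀)‖ ≤ be)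
    (h3 : ‖(1 - P₀) * P₂ * P₀‖ ≤ be) (h4 : ‖(1 - P₀) * P₂ * (1 - P₀)‖ ≤ al) :
    ‖P₂‖ ≤ 2 * be := by
  have hbe : 0 ≤ be := le_trans hal halbe
  apply opNorm_le_of _ (by positivity)
  intro v
  have hQh : (1 - P₀)ᴴ = 1 - P₀ := by
    rw [conjTranspose_sub, conjTranspose_one, hP0h]
  have hQi : (1 - P₀) * (1 - P₀) = 1 - P₀ := by noncomm_ring [hP0i]
  have hv : ‖v‖ ^ 2 = ‖ev P₀ v‖ ^ 2 + ‖ev (1 - P₀) v‖ ^ 2 := pyth P₀ hP0h hP0i v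
  have bnd : ∀ (M R : 𝕄) (γ : ℝ), ‖M‖ ≤ γ → M * R = M →
      ‖ev M v‖ ≤ γ * ‖ev R v‖ := by
    intro M R γ hMγ hMR
    calc ‖ev M v‖ = ‖ev (M * R) v‖ := by rw [hMR]
      _ = ‖ev M (ev R v)‖ := by rw [ev_mul]
      _ ≤ ‖M‖ * ‖ev R v‖ := norm_ev_le _ _
      _ ≤ γ * ‖ev R v‖ := by
          have := norm_nonneg (ev R v)
          nlinarith
  have e1 : ‖ev (P₀ * P₂ * P₀) v‖ ≤ al * ‖ev P₀ v‖ :=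
    bnd _ P₀ al h1 (by rw [mul_assoc, hP0i])
  have e2 : ‖ev (P₀ * P₂ * (1 - P₀)) v‖ ≤ be * ‖ev (1 - P₀) v‖ :=
    bnd _ (1 - P₀) be h2 (by rw [mul_assoc, hQi])
  have e3 : ‖ev ((1 - P₀) * P₂ * P₀) v‖ ≤ be * ‖ev P₀ v‖ :=
    bnd _ P₀ be h3 (by rw [mul_assoc, hP0i])
  have e4 : ‖ev ((1 - P₀) * P₂ * (1 - P₀)) v‖ ≤ al * ‖ev (1 - P₀) v‖ :=
    bnd _ (1 - P₀) al h4 (by rw [mul_assoc, hQi])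
  have split1 : ev (P₀ * P₂) v = ev (P₀ * P₂ * P₀) v + ev (P₀ * P₂ * (1 - P₀)) v := by
    have hm : P₀ * P₂ = P₀ * P₂ * P₀ + P₀ * P₂ * (1 - P₀) := by noncomm_ring
    rw [← ev_add, ← hm]
  have split2 : ev ((1 - P₀) * P₂) v
      = ev ((1 - P₀) * P₂ * P₀) v + ev ((1 - P₀) * P₂ * (1 - P₀)) v := by
    have hm : (1 - P₀) * P₂ = (1 - P₀) * P₂ * P₀ + (1 - P₀) * P₂ * (1 - P₀) := by noncomm_ring
    rw [← ev_add, ← hm]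
  have hpyth2 : ‖ev P₂ v‖ ^ 2 = ‖ev (P₀ * P₂) v‖ ^ 2 + ‖ev ((1 - P₀) * P₂) v‖ ^ 2 := by
    have := pyth P₀ hP0h hP0i (ev P₂ v)
    rw [← ev_mul, ← ev_mul] at this
    exact this
  have n1 : ‖ev (P₀ * P₂) v‖ ≤ al * ‖ev P₀ v‖ + be * ‖ev (1 - P₀) v‖ := by
    rw [split1]
    exact le_trans (norm_add_le _ _) (add_le_add e1 e2)
  have n2 : ‖ev ((1 - P₀) * P₂) v‖ ≤ be * ‖ev P₀ v‖ + al * ‖ev (1 - P₀) v‖ := by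
    rw [split2]
    exact le_trans (norm_add_le _ _) (add_le_add e3 e4)
  exact arith_assemble hal halbe (norm_nonneg _) (norm_nonneg _) (norm_nonneg _)
    (norm_nonneg _) (norm_nonneg _) (norm_nonneg _) hv hpyth2 n1 n2

noncomputable def ctL : Matrix (Fin n) (Fin n) ℂ →L[ℝ] Matrix (Fin n) (Fin n) ℂ :=
  LinearMap.toContinuousLinearMap
    { toFun := fun M => Mᴴ
      map_add' := fun M N => Matrix.conjTranspose_add M N
      map_smul' := fun r M => by
        ext i j
        simp [Matrix.conjTranspose_apply] }

lemma hasDerivAt_conjTranspose {f : ℝ → Matrix (Fin n) (Fin n) ℂ} {f' : Matrix (Fin n) (Fin n) ℂ}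
    {s : ℝ} (hf : HasDerivAt f f' s) : HasDerivAt (fun t => (f t)ᴴ) f'ᴴ s :=
  (ctL.hasFDerivAt.comp_hasDerivAt s hf : HasDerivAt (fun t => ctL (f t)) (ctL f') s)

lemma herm_of_deriv {f : ℝ → Matrix (Fin n) (Fin n) ℂ} {f' : Matrix (Fin n) (Fin n) ℂ} {s : ℝ}
    (hev : ∀ᶠ y in 𝓝 s, (f y)ᴴ = f y) (hf : HasDerivAt f f' s) : f'ᴴ = f' := by
  have h1 : HasDerivAt (fun t => (f t)ᴴ) f'ᴴ s := hasDerivAt_conjTranspose hf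
  have h2 : HasDerivAt f f'ᴴ s := by
    apply h1.congr_of_eventuallyEq
    filter_upwards [hev] with y hy
    exact hy.symm
  exact (h2.unique hf)


lemma proj_norm_le_one (Pm : 𝕄) (h : Pmᴴ = Pm) (hi : Pm * Pm = Pm) : ‖Pm‖ ≤ 1 := by
  have hh := Matrix.l2_opNorm_conjTranspose_mul_self Pm
  rw [h, hi] at hh
  nlinarith [norm_nonneg Pm, sq_nonneg (‖Pm‖ - 1)]

lemma norm_mul_le_one_left {Qm : 𝕄} (h : ‖Qm‖ ≤ 1) (M : 𝕄) : ‖Qm * M‖ ≤ ‖M‖ := by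
  calc ‖Qm * M‖ ≤ ‖Qm‖ * ‖M‖ := Matrix.l2_opNorm_mul _ _
    _ ≤ 1 * ‖M‖ := mul_le_mul_of_nonneg_right h (norm_nonneg M)
    _ = ‖M‖ := one_mul _

lemma norm_mul_le_one_right {Qm : 𝕄} (h : ‖Qm‖ ≤ 1) (M : 𝕄) : ‖M * Qm‖ ≤ ‖M‖ := by
  calc ‖M * Qm‖ ≤ ‖M‖ * ‖Qm‖ := Matrix.l2_opNorm_mul _ _
    _ ≤ ‖M‖ * 1 := mul_le_mul_of_nonneg_left h (norm_nonneg M)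
    _ = ‖M‖ := mul_one _

lemma alpha_beta {e1 e2 x D : ℝ} (hD : 0 < D) (hx : 0 ≤ x) (he2 : 0 ≤ e2)
    (hxb : D * x ≤ e1) : 2 * x ^ 2 ≤ (e2 + 4 * (e1 * x)) / D := by
  rw [le_div_iff₀ hD]
  nlinarith [mul_le_mul_of_nonneg_left hxb hx]

lemma final_arith {e1 e2 x D : ℝ} (hD : 0 < D) (hx : 0 ≤ x) (he1 : 0 ≤ e1) (he2 : 0 ≤ e2)
    (hxb : D * x ≤ e1) :
    2 * ((e2 + 4 * (e1 * x)) / D) ≤ 8 * e1 ^ 2 / D ^ 2 + 2 * e2 / D := by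
  rw [div_add_div _ _ (by positivity : (D:ℝ) ^ 2 ≠ 0) (ne_of_gt hD), ← mul_div_assoc,
    div_le_div_iff₀ hD (by positivity : (0:ℝ) < D ^ 2 * D)]
  nlinarith [mul_le_mul_of_nonneg_left hxb (by positivity : (0:ℝ) ≤ 8 * e1 * D ^ 2)]

lemma algebra_main (P0 P1 P2 H0 H1 H2 A : 𝕄) (c : ℂ)
    (hH0eq : H0 = A + c • 1)
    (hP0idem : P0 * P0 = P0)
    (hH0P0 : H0 * P0 = c • P0)
    (hP0H0 : P0 * H0 = c • P0)
    (hAP : A * P0 = 0)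
    (h4 : P1 = P1 * P0 + P0 * P1)
    (h5 : P2 = P2 * P0 + P1 * P1 + (P1 * P1 + P0 * P2))
    (h6 : H1 * P0 + H0 * P1 = P1 * (H0 * P0) + P0 * (H1 * P0 + H0 * P1))
    (h7 : H2 * P0 + H1 * P1 + (H1 * P1 + H0 * P2)
        = P2 * (H0 * P0) + P1 * (H1 * P0 + H0 * P1)
          + (P1 * (H1 * P0 + H0 * P1) + P0 * (H2 * P0 + H1 * P1 + (H1 * P1 + H0 * P2)))) :
    (P0 * (P1 * P0) = 0) ∧
    (A * (P1 * P0) = P0 * H1 * P0 - H1 * P0) ∧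
    (A * ((1 - P0) * (P2 * P0)) =
       (P0 * (H2 * P0) - H2 * P0)
       + ((P0 * (H1 * (P1 * P0)) - H1 * (P1 * P0)) + (P0 * (H1 * (P1 * P0)) - H1 * (P1 * P0)))
       + ((P1 * P0) * (H1 * P0) + (P1 * P0) * (H1 * P0))) ∧
    (P0 * P2 * P0 = -((P0 * P1) * (P1 * P0) + (P0 * P1) * (P1 * P0))) ∧
    ((1 - P0) * P2 * (1 - P0)
       = ((1 - P0) * P1) * (P1 * (1 - P0)) + ((1 - P0) * P1) * (P1 * (1 - P0))) ∧
    ((1 - P0) * P1 = (1 - P0) * (P1 * P0)) ∧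
    (P0 * ((1 - P0) * (P2 * P0)) = 0) := by
  have hPQ : P0 * (1 - P0) = 0 := by
    linear_combination (norm := (noncomm_ring; all_goals module)) -hP0idem
  have hQP : (1 - P0) * P0 = 0 := by
    linear_combination (norm := (noncomm_ring; all_goals module)) -hP0idem
  have g0 : P0 * P1 * P0 = 0 := by
    linear_combination (norm := (noncomm_ring; all_goals module)) -(P0 * h4 * P0) - P0 * P1 * hP0idem - hP0idem * P1 * P0
  have g1 : A * P1 = P0 * H1 * P0 - H1 * P0 := by
    linear_combination (norm := (noncomm_ring; all_goals module)) h6 - hH0eq * P1 + P1 * hH0P0 + hP0H0 * P1 - c • h4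
  have g1' : A * (P1 * P0) = P0 * H1 * P0 - H1 * P0 := by
    linear_combination (norm := (noncomm_ring; all_goals module)) g1 * P0 + P0 * H1 * hP0idem - H1 * hP0idem
  have g2 : A * P2 = (P0 * (H2 * P0) - H2 * P0)
      + ((P0 * (H1 * P1) - H1 * P1) + (P0 * (H1 * P1) - H1 * P1))
      + (P1 * (P0 * (H1 * P0)) + P1 * (P0 * (H1 * P0))) := by
    linear_combination (norm := (noncomm_ring; all_goals module)) h7 - hH0eq * P2 + P2 * hH0P0 + hP0H0 * P2
      - c • h5 + P1 * hH0eq * P1 + P1 * hH0eq * P1 + P1 * g1 + P1 * g1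
  have g2' : A * ((1 - P0) * (P2 * P0)) =
       (P0 * (H2 * P0) - H2 * P0)
       + ((P0 * (H1 * (P1 * P0)) - H1 * (P1 * P0)) + (P0 * (H1 * (P1 * P0)) - H1 * (P1 * P0)))
       + ((P1 * P0) * (H1 * P0) + (P1 * P0) * (H1 * P0)) := by
    linear_combination (norm := (noncomm_ring; all_goals module)) g2 * P0 - hAP * (P2 * P0)
      + P0 * H2 * hP0idem - H2 * hP0idem + P1 * P0 * H1 * hP0idem + P1 * P0 * H1 * hP0idem
  have gdiag : P0 * P2 * P0 = -((P0 * P1) * (P1 * P0) + (P0 * P1) * (P1 * P0)) := by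
    linear_combination (norm := (noncomm_ring; all_goals module)) -(P0 * h5 * P0) - P0 * P2 * hP0idem - hP0idem * P2 * P0
  have gQdiag : (1 - P0) * P2 * (1 - P0)
       = ((1 - P0) * P1) * (P1 * (1 - P0)) + ((1 - P0) * P1) * (P1 * (1 - P0)) := by
    linear_combination (norm := (noncomm_ring; all_goals module)) (1 - P0) * h5 * (1 - P0) + (1 - P0) * P2 * hPQ
      + hQP * (P2 * (1 - P0))
  have gQP1 : (1 - P0) * P1 = (1 - P0) * (P1 * P0) := by
    linear_combination (norm := (noncomm_ring; all_goals module)) h4 + g0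
  have gPX : P0 * ((1 - P0) * (P2 * P0)) = 0 := by
    linear_combination (norm := (noncomm_ring; all_goals module)) hPQ * (P2 * P0)
  exact ⟨by linear_combination (norm := (noncomm_ring; all_goals module)) g0, g1', g2', gdiag, gQdiag, gQP1, gPX⟩

end SpecAux

open SpecAux in
/-- Second derivative bound for the spectral projector:
`‖P''(s₀)‖ ≤ 8‖H'(s₀)‖²/Δ² + 2‖H''(s₀)‖/Δ`. -/
theorem stmt2 (n : ℕ) (hn : 1 ≤ n)
    (H P : ℝ → Matrix (Fin n) (Fin n) ℂ) (s₀ : ℝ)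
    (H' P' : ℝ → Matrix (Fin n) (Fin n) ℂ)
    (H'' P'' : Matrix (Fin n) (Fin n) ℂ)
    (ω0 : ℝ → ℝ) (Δ : ℝ)
    (hHherm : ∀ᶠ s in 𝓝 s₀, (H s).IsHermitian)
    (hHderiv : ∀ᶠ s in 𝓝 s₀, HasDerivAt H (H' s) s)
    (hHderiv2 : HasDerivAt H' H'' s₀)
    (hω0cont : ContinuousAt ω0 s₀)
    (hω0eig : ∀ᶠ s in 𝓝 s₀, (ω0 s : ℂ) ∈ spectrum ℂ (H s))
    (hΔpos : 0 < Δ)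
    (hgap : spectrum ℂ (H s₀) ∩
        ((fun x : ℝ => (x : ℂ)) '' Set.Icc (ω0 s₀ - Δ) (ω0 s₀ + Δ)) = {(ω0 s₀ : ℂ)})
    (hPderiv : ∀ᶠ s in 𝓝 s₀, HasDerivAt P (P' s) s)
    (hPderiv2 : HasDerivAt P' P'' s₀)
    (hPproj : ∀ᶠ s in 𝓝 s₀, (P s).IsHermitian ∧ P s * P s = P s ∧
        ∀ v : Fin n → ℂ, (H s).mulVec v = (ω0 s : ℂ) • v ↔ (P s).mulVec v = v) :
    ‖P''‖ ≤ 8 * ‖H' s₀‖ ^ 2 / Δ ^ 2 + 2 * ‖H''‖ / Δ := by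
  classical
  obtain ⟨hP0hermIsH, hP0idem, hprojchar⟩ := hPproj.self_of_nhds
  have hP0herm : (P s₀)ᴴ = P s₀ := hP0hermIsH
  have hH0 : (H s₀).IsHermitian := hHherm.self_of_nhds
  have hP0d : HasDerivAt P (P' s₀) s₀ := hPderiv.self_of_nhds
  have hH0d : HasDerivAt H (H' s₀) s₀ := hHderiv.self_of_nhds
  -- eventually `H s * P s = ω0 s • P s`
  have evHP : ∀ᶠ s in 𝓝 s₀, H s * P s = ((ω0 s : ℂ)) • P s := by
    filter_upwards [hPproj] with s hs
    obtain ⟨-, hidem, hchar⟩ := hs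
    ext i j
    have hcol : P s *ᵥ (fun k => P s k j) = fun k => P s k j := by
      funext i'
      have h0 := congrFun (congrFun hidem i') j
      rw [Matrix.mul_apply] at h0
      simpa [Matrix.mulVec, dotProduct] using h0
    have h2 := congrFun ((hchar fun k => P s k j).2 hcol) i
    simp only [Matrix.mulVec, dotProduct, Pi.smul_apply, smul_eq_mul] at h2
    rw [Matrix.mul_apply, Matrix.smul_apply, smul_eq_mul]
    exact h2
  have hH0P0 : H s₀ * P s₀ = ((ω0 s₀ : ℂ)) • P s₀ := evHP.self_of_nhds
  -- the shifted operator `A`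
  obtain ⟨A, hAdef⟩ : ∃ A' : Matrix (Fin n) (Fin n) ℂ, A' = H s₀ - ((ω0 s₀ : ℂ)) • 1 := ⟨_, rfl⟩
  have hH0eq : H s₀ = A + ((ω0 s₀ : ℂ)) • 1 := by rw [hAdef, sub_add_cancel]
  have hAP : A * P s₀ = 0 := by
    rw [hAdef, sub_mul, smul_mul_assoc, one_mul, hH0P0, sub_self]
  have hAherm : Aᴴ = A := by
    rw [hAdef, Matrix.conjTranspose_sub, hH0.eq, Matrix.conjTranspose_smul,
      Matrix.conjTranspose_one]
    congr 1
    simp [Complex.conj_ofReal]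
  have hPA : P s₀ * A = 0 := by
    have h := congrArg Matrix.conjTranspose hAP
    rwa [Matrix.conjTranspose_mul, hAherm, hP0herm, Matrix.conjTranspose_zero] at h
  have hP0H0 : P s₀ * H s₀ = ((ω0 s₀ : ℂ)) • P s₀ := by
    rw [hH0eq, mul_add, hPA, zero_add, Matrix.mul_smul, mul_one]
  -- first derivative identity, eventually
  have evDL : ∀ᶠ s in 𝓝 s₀, HasDerivAt (fun t => H t * P t) (H' s * P s + H s * P' s) s := by
    filter_upwards [hHderiv, hPderiv] with s h1 h2 using h1.mul h2
  have evL : (fun s => H s * P s) =ᶠ[𝓝 s₀] (fun s => P s * (H s * P s)) := by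
    filter_upwards [evHP, hPproj] with s h1 h2
    rw [h1, mul_smul_comm, h2.2.1]
  have evEq1 : ∀ᶠ s in 𝓝 s₀, H' s * P s + H s * P' s
      = P' s * (H s * P s) + P s * (H' s * P s + H s * P' s) := by
    filter_upwards [evDL, hPderiv, evL.eventually_nhds] with s h1 h2 h3
    exact h1.unique ((h2.mul h1).congr_of_eventuallyEq h3)
  have h6 := evEq1.self_of_nhds
  -- second derivative identity at s₀
  have hLd : HasDerivAt (fun t => H t * P t) (H' s₀ * P s₀ + H s₀ * P' s₀) s₀ :=
    evDL.self_of_nhds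
  have hL'd : HasDerivAt (fun s => H' s * P s + H s * P' s)
      (H'' * P s₀ + H' s₀ * P' s₀ + (H' s₀ * P' s₀ + H s₀ * P'')) s₀ :=
    (hHderiv2.mul hP0d).add (hH0d.mul hPderiv2)
  have hRd : HasDerivAt (fun s => P' s * (H s * P s) + P s * (H' s * P s + H s * P' s))
      (P'' * (H s₀ * P s₀) + P' s₀ * (H' s₀ * P s₀ + H s₀ * P' s₀)
        + (P' s₀ * (H' s₀ * P s₀ + H s₀ * P' s₀)
          + P s₀ * (H'' * P s₀ + H' s₀ * P' s₀ + (H' s₀ * P' s₀ + H s₀ * P'')))) s₀ :=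
    (hPderiv2.mul hLd).add (hP0d.mul hL'd)
  have h7 : H'' * P s₀ + H' s₀ * P' s₀ + (H' s₀ * P' s₀ + H s₀ * P'')
      = P'' * (H s₀ * P s₀) + P' s₀ * (H' s₀ * P s₀ + H s₀ * P' s₀)
        + (P' s₀ * (H' s₀ * P s₀ + H s₀ * P' s₀)
          + P s₀ * (H'' * P s₀ + H' s₀ * P' s₀ + (H' s₀ * P' s₀ + H s₀ * P''))) :=
    hL'd.unique (hRd.congr_of_eventuallyEq evEq1)
  -- idempotency derivatives
  have evEqP : ∀ᶠ s in 𝓝 s₀, P' s = P' s * P s + P s * P' s := by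
    have evPP : (fun s => P s) =ᶠ[𝓝 s₀] (fun s => P s * P s) := by
      filter_upwards [hPproj] with s hs using hs.2.1.symm
    filter_upwards [hPderiv, evPP.eventually_nhds] with s h1 h3
    exact h1.unique ((h1.mul h1).congr_of_eventuallyEq h3)
  have h4 := evEqP.self_of_nhds
  have hPPd : HasDerivAt (fun s => P' s * P s + P s * P' s)
      (P'' * P s₀ + P' s₀ * P' s₀ + (P' s₀ * P' s₀ + P s₀ * P'')) s₀ :=
    (hPderiv2.mul hP0d).add (hP0d.mul hPderiv2)
  have h5 : P'' = P'' * P s₀ + P' s₀ * P' s₀ + (P' s₀ * P' s₀ + P s₀ * P'') :=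
    hPderiv2.unique (hPPd.congr_of_eventuallyEq evEqP)
  -- Hermitian derivatives
  have evP1herm : ∀ᶠ s in 𝓝 s₀, (P' s)ᴴ = P' s := by
    have evPh : ∀ᶠ s in 𝓝 s₀, (P s)ᴴ = P s := by
      filter_upwards [hPproj] with s hs using hs.1
    filter_upwards [hPderiv, evPh.eventually_nhds] with s h1 h2
    exact herm_of_deriv h2 h1
  have hP1herm : (P' s₀)ᴴ = P' s₀ := evP1herm.self_of_nhds
  have hP2herm : P''ᴴ = P'' := herm_of_deriv evP1herm hPderiv2
  -- eigenvalue gap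
  have heig : ∀ i, hH0.eigenvalues i ≠ ω0 s₀ → Δ ≤ |hH0.eigenvalues i - ω0 s₀| := by
    intro i hne
    by_contra hlt
    push_neg at hlt
    have hmem : (hH0.eigenvalues i : ℂ) ∈ spectrum ℂ (H s₀) := by
      have h1 := hH0.eigenvalues_mem_spectrum_real i
      have h2 := spectrum.algebraMap_mem ℂ h1
      simpa using h2
    have habs := abs_lt.mp hlt
    have hmem2 : (hH0.eigenvalues i : ℂ) ∈
        ((fun x : ℝ => (x : ℂ)) '' Set.Icc (ω0 s₀ - Δ) (ω0 s₀ + Δ)) := by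
      refine ⟨hH0.eigenvalues i, ?_, rfl⟩
      rw [Set.mem_Icc]
      constructor <;> linarith [habs.1, habs.2]
    have h3 : (hH0.eigenvalues i : ℂ) ∈ ({(ω0 s₀ : ℂ)} : Set ℂ) := by
      rw [← hgap]; exact ⟨hmem, hmem2⟩
    rw [Set.mem_singleton_iff] at h3
    exact hne (by exact_mod_cast h3)
  -- algebraic identities
  obtain ⟨g0, g1, g2, gdiag, gQdiag, gQP1, gPX⟩ :=
    algebra_main (P s₀) (P' s₀) P'' (H s₀) (H' s₀) H'' A ((ω0 s₀ : ℂ))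
      hH0eq hP0idem hH0P0 hP0H0 hAP h4 h5 h6 h7
  -- norms of projections
  have hP0n : ‖P s₀‖ ≤ 1 := proj_norm_le_one _ hP0herm hP0idem
  have hQherm : (1 - P s₀)ᴴ = 1 - P s₀ := by
    rw [Matrix.conjTranspose_sub, Matrix.conjTranspose_one, hP0herm]
  have hQidem : (1 - P s₀) * (1 - P s₀) = 1 - P s₀ := by noncomm_ring [hP0idem]
  have hQn : ‖(1 - P s₀)‖ ≤ 1 := proj_norm_le_one _ hQherm hQidem
  have hsand : ∀ M : Matrix (Fin n) (Fin n) ℂ, ‖(1 - P s₀) * M‖ ≤ ‖M‖ :=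
    fun M => norm_mul_le_one_left hQn M
  have hsandP : ∀ M : Matrix (Fin n) (Fin n) ℂ, ‖M * P s₀‖ ≤ ‖M‖ :=
    fun M => norm_mul_le_one_right hP0n M
  -- the gap inequality, matrix form
  have gapM := gap_mat hH0 hP0herm (ω0 s₀) Δ hΔpos heig hprojchar
  -- bound on ‖P' s₀ * P s₀‖
  have hx1b : Δ * ‖P' s₀ * P s₀‖ ≤ ‖H' s₀‖ := by
    have h1 := gapM (P' s₀ * P s₀) g0
    rw [← hAdef, g1] at h1
    calc Δ * ‖P' s₀ * P s₀‖ ≤ ‖P s₀ * H' s₀ * P s₀ - H' s₀ * P s₀‖ := h1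
      _ = ‖(1 - P s₀) * (H' s₀ * P s₀)‖ := by
          rw [show P s₀ * H' s₀ * P s₀ - H' s₀ * P s₀ = -((1 - P s₀) * (H' s₀ * P s₀)) by
            noncomm_ring, norm_neg]
      _ ≤ ‖H' s₀ * P s₀‖ := hsand _
      _ ≤ ‖H' s₀‖ := hsandP _
  -- bound on the off-diagonal block
  have hx2 : Δ * ‖(1 - P s₀) * (P'' * P s₀)‖
      ≤ ‖H''‖ + 4 * (‖H' s₀‖ * ‖P' s₀ * P s₀‖) := by
    have h1 := gapM ((1 - P s₀) * (P'' * P s₀)) gPX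
    rw [← hAdef, g2] at h1
    refine le_trans h1 ?_
    have e1 : ‖P s₀ * (H'' * P s₀) - H'' * P s₀‖ ≤ ‖H''‖ := by
      rw [show P s₀ * (H'' * P s₀) - H'' * P s₀ = -((1 - P s₀) * (H'' * P s₀)) by noncomm_ring,
        norm_neg]
      exact le_trans (hsand _) (hsandP _)
    have e2 : ‖P s₀ * (H' s₀ * (P' s₀ * P s₀)) - H' s₀ * (P' s₀ * P s₀)‖
        ≤ ‖H' s₀‖ * ‖P' s₀ * P s₀‖ := by
      rw [show P s₀ * (H' s₀ * (P' s₀ * P s₀)) - H' s₀ * (P' s₀ * P s₀)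
          = -((1 - P s₀) * (H' s₀ * (P' s₀ * P s₀))) by noncomm_ring, norm_neg]
      exact le_trans (hsand _) (Matrix.l2_opNorm_mul _ _)
    have e3 : ‖(P' s₀ * P s₀) * (H' s₀ * P s₀)‖ ≤ ‖H' s₀‖ * ‖P' s₀ * P s₀‖ := by
      calc ‖(P' s₀ * P s₀) * (H' s₀ * P s₀)‖
          ≤ ‖P' s₀ * P s₀‖ * ‖H' s₀ * P s₀‖ := Matrix.l2_opNorm_mul _ _
        _ ≤ ‖P' s₀ * P s₀‖ * ‖H' s₀‖ :=
            mul_le_mul_of_nonneg_left (hsandP (H' s₀)) (norm_nonneg _)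
        _ = ‖H' s₀‖ * ‖P' s₀ * P s₀‖ := mul_comm _ _
    calc ‖(P s₀ * (H'' * P s₀) - H'' * P s₀)
        + ((P s₀ * (H' s₀ * (P' s₀ * P s₀)) - H' s₀ * (P' s₀ * P s₀))
          + (P s₀ * (H' s₀ * (P' s₀ * P s₀)) - H' s₀ * (P' s₀ * P s₀)))
        + ((P' s₀ * P s₀) * (H' s₀ * P s₀) + (P' s₀ * P s₀) * (H' s₀ * P s₀))‖
        ≤ ‖(P s₀ * (H'' * P s₀) - H'' * P s₀)
            + ((P s₀ * (H' s₀ * (P' s₀ * P s₀)) - H' s₀ * (P' s₀ * P s₀))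
              + (P s₀ * (H' s₀ * (P' s₀ * P s₀)) - H' s₀ * (P' s₀ * P s₀)))‖
          + ‖(P' s₀ * P s₀) * (H' s₀ * P s₀) + (P' s₀ * P s₀) * (H' s₀ * P s₀)‖ :=
        norm_add_le _ _
      _ ≤ (‖P s₀ * (H'' * P s₀) - H'' * P s₀‖
            + (‖P s₀ * (H' s₀ * (P' s₀ * P s₀)) - H' s₀ * (P' s₀ * P s₀)‖
              + ‖P s₀ * (H' s₀ * (P' s₀ * P s₀)) - H' s₀ * (P' s₀ * P s₀)‖))
          + (‖(P' s₀ * P s₀) * (H' s₀ * P s₀)‖ + ‖(P' s₀ * P s₀) * (H' s₀ * P s₀)‖) :=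
        add_le_add (le_trans (norm_add_le _ _) (add_le_add le_rfl (norm_add_le _ _)))
          (norm_add_le _ _)
      _ ≤ ‖H''‖ + 4 * (‖H' s₀‖ * ‖P' s₀ * P s₀‖) := by linarith [e1, e2, e3]
  -- the four block bounds
  have hx1nn : (0:ℝ) ≤ ‖P' s₀ * P s₀‖ := norm_nonneg _
  have hP0P1 : ‖P s₀ * P' s₀‖ = ‖P' s₀ * P s₀‖ := by
    rw [show P s₀ * P' s₀ = (P' s₀ * P s₀)ᴴ by
      rw [Matrix.conjTranspose_mul, hP1herm, hP0herm], Matrix.l2_opNorm_conjTranspose]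
  have B1 : ‖P s₀ * P'' * P s₀‖ ≤ 2 * ‖P' s₀ * P s₀‖ ^ 2 := by
    rw [gdiag, norm_neg]
    calc ‖(P s₀ * P' s₀) * (P' s₀ * P s₀) + (P s₀ * P' s₀) * (P' s₀ * P s₀)‖
        ≤ ‖(P s₀ * P' s₀) * (P' s₀ * P s₀)‖ + ‖(P s₀ * P' s₀) * (P' s₀ * P s₀)‖ :=
        norm_add_le _ _
      _ ≤ 2 * ‖P' s₀ * P s₀‖ ^ 2 := by
          have h := Matrix.l2_opNorm_mul (P s₀ * P' s₀) (P' s₀ * P s₀)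
          rw [hP0P1] at h
          rw [pow_two]
          linarith [h]
  have hQP1n : ‖(1 - P s₀) * P' s₀‖ ≤ ‖P' s₀ * P s₀‖ := by
    rw [gQP1]
    exact hsand _
  have hP1Qn : ‖P' s₀ * (1 - P s₀)‖ ≤ ‖P' s₀ * P s₀‖ := by
    rw [show P' s₀ * (1 - P s₀) = ((1 - P s₀) * P' s₀)ᴴ by
      rw [Matrix.conjTranspose_mul, hP1herm, hQherm], Matrix.l2_opNorm_conjTranspose]
    exact hQP1n
  have B4 : ‖(1 - P s₀) * P'' * (1 - P s₀)‖ ≤ 2 * ‖P' s₀ * P s₀‖ ^ 2 := by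
    rw [gQdiag]
    calc ‖((1 - P s₀) * P' s₀) * (P' s₀ * (1 - P s₀))
          + ((1 - P s₀) * P' s₀) * (P' s₀ * (1 - P s₀))‖
        ≤ ‖((1 - P s₀) * P' s₀) * (P' s₀ * (1 - P s₀))‖
          + ‖((1 - P s₀) * P' s₀) * (P' s₀ * (1 - P s₀))‖ := norm_add_le _ _
      _ ≤ 2 * ‖P' s₀ * P s₀‖ ^ 2 := by
          have h := Matrix.l2_opNorm_mul ((1 - P s₀) * P' s₀) (P' s₀ * (1 - P s₀))
          have h2 : ‖(1 - P s₀) * P' s₀‖ * ‖P' s₀ * (1 - P s₀)‖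
              ≤ ‖P' s₀ * P s₀‖ * ‖P' s₀ * P s₀‖ :=
            mul_le_mul hQP1n hP1Qn (norm_nonneg _) hx1nn
          rw [pow_two]
          linarith [h, h2]
  have B3 : ‖(1 - P s₀) * P'' * P s₀‖
      ≤ (‖H''‖ + 4 * (‖H' s₀‖ * ‖P' s₀ * P s₀‖)) / Δ := by
    rw [le_div_iff₀ hΔpos]
    have hassoc : (1 - P s₀) * P'' * P s₀ = (1 - P s₀) * (P'' * P s₀) := by rw [mul_assoc]
    rw [hassoc]
    calc ‖(1 - P s₀) * (P'' * P s₀)‖ * Δ = Δ * ‖(1 - P s₀) * (P'' * P s₀)‖ := mul_comm _ _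
      _ ≤ _ := hx2
  have B2 : ‖P s₀ * P'' * (1 - P s₀)‖
      ≤ (‖H''‖ + 4 * (‖H' s₀‖ * ‖P' s₀ * P s₀‖)) / Δ := by
    rw [show P s₀ * P'' * (1 - P s₀) = ((1 - P s₀) * P'' * P s₀)ᴴ by
      rw [Matrix.conjTranspose_mul, Matrix.conjTranspose_mul, hP2herm, hP0herm, hQherm,
        mul_assoc], Matrix.l2_opNorm_conjTranspose]
    exact B3
  have hαβ : 2 * ‖P' s₀ * P s₀‖ ^ 2
      ≤ (‖H''‖ + 4 * (‖H' s₀‖ * ‖P' s₀ * P s₀‖)) / Δ :=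
    alpha_beta hΔpos hx1nn (norm_nonneg H'') hx1b
  have hfin := assemble P'' (P s₀) hP0herm hP0idem (by positivity) hαβ B1 B2 B3 B4
  refine le_trans hfin ?_
  exact final_arith hΔpos hx1nn (norm_nonneg (H' s₀)) (norm_nonneg H'') hx1b
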